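/- Let q be a nonzero complex number and for z ∈ ℂ with 1 − q²z ≠ 0 define b(z) = (1−z)q/(1−q²z), c(z) = (1−q²)/(1−q²z), and the 4×4 complex matrix R̂(z) with rows (1,0,0,0), (0, z·c(z), b(z), 0), (0, b(z), c(z), 0), (0,0,0,1). Then for all z, z′ ∈ ℂ such that 1 − q²z ≠ 0, 1 − q²z′ ≠ 0, and 1 − q²zz′ ≠ 0, the Baxterized braid equation holds: R̂₁₂(z)·R̂₂₃(z·z′)·R̂₁₂(z′) = R̂₂₃(z′)·R̂₁₂(z·z′)·R̂₂₃(z). -/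

import Mathlib

set_option maxHeartbeats 0


open Matrix Kronecker

/-- Order-preserving encoding of `Fin 2 × Fin 2` into `Fin 4`, corresponding to the
basis order `e₁⊗e₁, e₁⊗e₂, e₂⊗e₁, e₂⊗e₂`. -/
noncomputable def enc4 : Fin 2 × Fin 2 → Fin 4 := fun p => ![![0, 1], ![2, 3]] p.1 p.2

/-- View a `4×4` matrix as a matrix on `ℂ² ⊗ ℂ²`. -/
noncomputable def toT (A : Matrix (Fin 4) (Fin 4) ℂ) :
    Matrix (Fin 2 × Fin 2) (Fin 2 × Fin 2) ℂ := A.submatrix enc4 enc4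

/-- `A₁₂ = A ⊗ I₂`, acting on the first two factors of `ℂ²⊗ℂ²⊗ℂ²`. -/
noncomputable def op12 (A : Matrix (Fin 4) (Fin 4) ℂ) :
    Matrix (Fin 2 × Fin 2 × Fin 2) (Fin 2 × Fin 2 × Fin 2) ℂ :=
  Matrix.reindex (Equiv.prodAssoc (Fin 2) (Fin 2) (Fin 2))
    (Equiv.prodAssoc (Fin 2) (Fin 2) (Fin 2))
    (toT A ⊗ₖ (1 : Matrix (Fin 2) (Fin 2) ℂ))

/-- `A₂₃ = I₂ ⊗ A`, acting on the last two factors of `ℂ²⊗ℂ²⊗ℂ²`. -/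
noncomputable def op23 (A : Matrix (Fin 4) (Fin 4) ℂ) :
    Matrix (Fin 2 × Fin 2 × Fin 2) (Fin 2 × Fin 2 × Fin 2) ℂ :=
  (1 : Matrix (Fin 2) (Fin 2) ℂ) ⊗ₖ toT A

/-- The Baxterized braid matrix of `U_q(ŝl₂)`, with
`b(z) = (1-z)q/(1-q²z)` and `c(z) = (1-q²)/(1-q²z)`. -/
noncomputable def Rsl2 (q z : ℂ) : Matrix (Fin 4) (Fin 4) ℂ :=
  !![1, 0, 0, 0;
     0, z * ((1 - q ^ 2) / (1 - q ^ 2 * z)), (1 - z) * q / (1 - q ^ 2 * z), 0;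
     0, (1 - z) * q / (1 - q ^ 2 * z), (1 - q ^ 2) / (1 - q ^ 2 * z), 0;
     0, 0, 0, 1]

noncomputable def tmat (q z : ℂ) : Matrix (Fin 2 × Fin 2) (Fin 2 × Fin 2) ℂ :=
  fun p p' =>
    if p = (0, 0) ∧ p' = (0, 0) then 1
    else if p = (0, 1) ∧ p' = (0, 1) then z * ((1 - q ^ 2) / (1 - q ^ 2 * z))
    else if p = (0, 1) ∧ p' = (1, 0) then (1 - z) * q / (1 - q ^ 2 * z)
    else if p = (1, 0) ∧ p' = (0, 1) then (1 - z) * q / (1 - q ^ 2 * z)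
    else if p = (1, 0) ∧ p' = (1, 0) then (1 - q ^ 2) / (1 - q ^ 2 * z)
    else if p = (1, 1) ∧ p' = (1, 1) then 1
    else 0

lemma toT_Rsl2 (q z : ℂ) : toT (Rsl2 q z) = tmat q z := by
  ext ⟨i, j⟩ ⟨k, l⟩
  fin_cases i <;> fin_cases j <;> fin_cases k <;> fin_cases l <;>
    simp [toT, Rsl2, enc4, tmat, Prod.ext_iff, Matrix.vecHead, Matrix.vecTail]

/-- the Baxterized braid equation for the `U_q(ŝl₂)` braid matrix with
multiplicative spectral parameter. -/
theorem uq_sl2_braid_equation (q : ℂ) (hq : q ≠ 0) (z z' : ℂ)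
    (h1 : 1 - q ^ 2 * z ≠ 0) (h2 : 1 - q ^ 2 * z' ≠ 0) (h3 : 1 - q ^ 2 * (z * z') ≠ 0) :
    op12 (Rsl2 q z) * op23 (Rsl2 q (z * z')) * op12 (Rsl2 q z') =
      op23 (Rsl2 q z') * op12 (Rsl2 q (z * z')) * op23 (Rsl2 q z) := by
  have h1' : 1 - z * q ^ 2 ≠ 0 := by intro h; apply h1; linear_combination h
  have h2' : 1 - z' * q ^ 2 ≠ 0 := by intro h; apply h2; linear_combination h
  have h3_ : 1 - q ^ 2 * z * z' ≠ 0 := by intro h; apply h3; linear_combination h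
  have h3__ : 1 - q ^ 2 * z' * z ≠ 0 := by intro h; apply h3; linear_combination h
  have h3___ : 1 - z * q ^ 2 * z' ≠ 0 := by intro h; apply h3; linear_combination h
  have h3____ : 1 - z' * q ^ 2 * z ≠ 0 := by intro h; apply h3; linear_combination h
  have h3_____ : 1 - z * z' * q ^ 2 ≠ 0 := by intro h; apply h3; linear_combination h
  have h3______ : 1 - z' * z * q ^ 2 ≠ 0 := by intro h; apply h3; linear_combination h
  have h3_______ : 1 - q ^ 2 * (z' * z) ≠ 0 := by intro h; apply h3; linear_combination h
  ext ⟨i, j, k⟩ ⟨i', j', k'⟩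
  fin_cases i <;> fin_cases j <;> fin_cases k <;> fin_cases i' <;> fin_cases j' <;> fin_cases k' <;>
  · simp only [op12, op23, toT_Rsl2, Matrix.mul_apply, Matrix.reindex_apply,
      Matrix.submatrix_apply, Matrix.kroneckerMap_apply, Fintype.sum_prod_type,
      Fin.sum_univ_two, Equiv.prodAssoc, Equiv.coe_fn_symm_mk, Matrix.one_apply, tmat]
    norm_num [Prod.ext_iff]
    try field_simp
    try ring
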